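/- The set of locally adjointable operators from M to N is a norm-closed linear subspace of the Banach space of all bounded A-linear maps from M to N; in particular, if F_n → F in operator norm and each F_n is locally adjointable, then F is locally adjointable. -/

import Mathlib

open scoped RightActions
open Filter

/-- Mathlib's `CStarModule` as of December 2024: a right `A`-module (action of `Aᵐᵒᵖ`)
with an `A`-valued inner product, `A`-linear on the right. -/
class RightCStarModule (A E : Type*) [NonUnitalSemiring A] [StarRing A] [Module ℂ A]
    [AddCommGroup E] [Module ℂ E] [PartialOrder A] [SMul Aᵐᵒᵖ E] [Norm A] [Norm E]
    extends Inner A E where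
  inner_add_right {x} {y} {z} : inner x (y + z) = inner x y + inner x z
  inner_self_nonneg {x} : 0 ≤ inner x x
  inner_self {x} : inner x x = 0 ↔ x = 0
  inner_op_smul_right {a : A} {x y : E} : inner x (y <• a) = inner x y * a
  inner_smul_right_complex {z : ℂ} {x} {y} : inner x (z • y) = z • inner x y
  star_inner x y : star (inner x y) = inner y x
  norm_eq_sqrt_norm_inner_self x : ‖x‖ = √‖inner x x‖

/-- `S` is an adjoint of `T` with respect to the `A`-valued inner products:
`⟪T x, y⟫ = ⟪x, S y⟫` for all `x, y`. -/
def IsAdjointPair (A : Type*) {E F : Type*} [Inner A E] [Inner A F]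
    (T : E → F) (S : F → E) : Prop :=
  ∀ (x : E) (y : F), (inner A (T x) y : A) = inner A x (S y)

/-- `T` is adjointable: it possesses an adjoint. -/
def HasAdjoint (A : Type*) {E F : Type*} [Inner A E] [Inner A F] (T : E → F) : Prop :=
  ∃ S : F → E, IsAdjointPair A T S

/-- `T` is `A`-linear: it commutes with the right `A`-action. -/
def IsALinear (A : Type*) {E F : Type*} [SMul Aᵐᵒᵖ E] [SMul Aᵐᵒᵖ F] (T : E → F) : Prop :=
  ∀ (x : E) (a : A), T (x <• a) = T x <• a

/-- A bounded operator `T : M → N` of Hilbert C*-modules is *locally adjointable* if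
`T ∘ γ` is adjointable for every adjointable (`A`-linear bounded) `γ : A → M`. -/
def LocallyAdjointable (A : Type*) [NonUnitalCStarAlgebra A] [PartialOrder A]
    [StarOrderedRing A] {M N : Type*}
    [NormedAddCommGroup M] [NormedSpace ℂ M] [SMul Aᵐᵒᵖ M] [RightCStarModule A M]
    [Inner A N] (T : M → N) : Prop :=
  ∀ γ : A →L[ℂ] M, IsALinear A ⇑γ → HasAdjoint A ⇑γ → HasAdjoint A (T ∘ ⇑γ)

variable {A : Type*} [NonUnitalCStarAlgebra A] [PartialOrder A] [StarOrderedRing A]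
variable {K N : Type*}
  [NormedAddCommGroup K] [NormedSpace ℂ K] [SMul Aᵐᵒᵖ K] [RightCStarModule A K]
  [NormedAddCommGroup N] [NormedSpace ℂ N] [SMul Aᵐᵒᵖ N] [RightCStarModule A N]

section RCS

namespace RightCStarModule

variable {E : Type*}
  [NormedAddCommGroup E] [NormedSpace ℂ E] [SMul Aᵐᵒᵖ E] [RightCStarModule A E]

lemma inner_add_left {x y z : E} : inner A (x + y) z = inner A x z + inner A y z := by
  rw [← star_inner z (x + y), inner_add_right, star_add, star_inner, star_inner]

lemma inner_op_smul_left {a : A} {x y : E} : inner A (x <• a) y = star a * inner A x y := by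
  rw [← star_inner y (x <• a), inner_op_smul_right, star_mul, star_inner]

lemma inner_smul_left_complex {z : ℂ} {x y : E} : inner A (z • x) y = star z • inner A x y := by
  rw [← star_inner y (z • x), inner_smul_right_complex, star_smul, star_inner]

lemma inner_sub_right {x y z : E} : inner A x (y - z) = inner A x y - inner A x z := by
  have h : inner A x (y - z) + inner A x z = inner A x y := by
    rw [← inner_add_right, sub_add_cancel]
  exact eq_sub_of_add_eq h

lemma inner_sub_left {x y z : E} : inner A (x - y) z = inner A x z - inner A y z := by
  have h : inner A (x - y) z + inner A y z = inner A x z := by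
    rw [← inner_add_left, sub_add_cancel]
  exact eq_sub_of_add_eq h

lemma inner_zero_right {x : E} : inner A x (0 : E) = 0 := by
  simpa using (inner_sub_right (A := A) (x := x) (y := (0 : E)) (z := 0))

lemma inner_zero_left {x : E} : inner A (0 : E) x = 0 := by
  simpa using (inner_sub_left (A := A) (x := (0 : E)) (y := (0 : E)) (z := x))

lemma norm_sq_eq (x : E) : ‖x‖ ^ 2 = ‖inner A x x‖ := by
  rw [norm_eq_sqrt_norm_inner_self (A := A) x, Real.sq_sqrt (norm_nonneg _)]

lemma inner_mul_inner_swap_le {x y : E} :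
    inner A y x * inner A x y ≤ ‖x‖ ^ 2 • inner A y y := by
  rcases eq_or_ne x 0 with h | h
  · simp [h, inner_zero_left, inner_zero_right]
  · have hxpos : 0 < ‖x‖ := norm_pos_iff.mpr h
    have hcx : ‖inner A x x‖ = ‖x‖ ^ 2 := (norm_sq_eq x).symm
    have h0 : (0:A) ≤ inner A (x <• inner A x y - ((‖x‖ ^ 2 : ℝ) : ℂ) • y)
        (x <• inner A x y - ((‖x‖ ^ 2 : ℝ) : ℂ) • y) := inner_self_nonneg
    have hexp : inner A (x <• inner A x y - ((‖x‖ ^ 2 : ℝ) : ℂ) • y)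
        (x <• inner A x y - ((‖x‖ ^ 2 : ℝ) : ℂ) • y)
        = star (inner A x y) * inner A x x * inner A x y
          - ‖x‖ ^ 2 • (inner A y x * inner A x y) - ‖x‖ ^ 2 • (inner A y x * inner A x y)
          + ‖x‖ ^ 2 • (‖x‖ ^ 2 • inner A y y) := by
      simp only [inner_sub_left, inner_sub_right, inner_op_smul_left, inner_op_smul_right,
        inner_smul_left_complex, inner_smul_right_complex, star_inner]
      simp only [Complex.star_def, Complex.conj_ofReal, Complex.coe_smul, mul_smul_comm,
        sub_mul, mul_sub, smul_sub, smul_mul_assoc, mul_assoc, star_inner]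
      abel
    have hle : star (inner A x y) * inner A x x * inner A x y
        ≤ ‖x‖ ^ 2 • (inner A y x * inner A x y) := by
      rw [← hcx, ← star_inner x y]
      exact CStarAlgebra.star_left_conjugate_le_norm_smul (star_inner x x)
    rw [hexp] at h0
    have h3 : star (inner A x y) * inner A x x * inner A x y
          - ‖x‖ ^ 2 • (inner A y x * inner A x y) - ‖x‖ ^ 2 • (inner A y x * inner A x y)
          + ‖x‖ ^ 2 • (‖x‖ ^ 2 • inner A y y)
        ≤ ‖x‖ ^ 2 • (inner A y x * inner A x y)
          - ‖x‖ ^ 2 • (inner A y x * inner A x y) - ‖x‖ ^ 2 • (inner A y x * inner A x y)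
          + ‖x‖ ^ 2 • (‖x‖ ^ 2 • inner A y y) := by gcongr
    have h2 := h0.trans h3
    rw [sub_self, zero_sub, neg_add_eq_sub, sub_nonneg] at h2
    exact (smul_le_smul_iff_of_pos_left (pow_pos hxpos 2)).mp h2

lemma norm_inner_le {x y : E} : ‖inner A x y‖ ≤ ‖x‖ * ‖y‖ := by
  have h : ‖inner A x y‖ ^ 2 ≤ (‖x‖ * ‖y‖) ^ 2 := by
    calc ‖inner A x y‖ ^ 2 = ‖inner A y x * inner A x y‖ := by
          rw [← star_inner x y, CStarRing.norm_star_mul_self, pow_two]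
      _ ≤ ‖‖x‖ ^ 2 • inner A y y‖ := by
          refine CStarAlgebra.norm_le_norm_of_nonneg_of_le ?_ inner_mul_inner_swap_le
          rw [← star_inner x y]; exact star_mul_self_nonneg _
      _ = ‖x‖ ^ 2 * ‖inner A y y‖ := by rw [norm_smul, Real.norm_of_nonneg (by positivity)]
      _ = (‖x‖ * ‖y‖) ^ 2 := by rw [← norm_sq_eq]; ring
  exact (pow_le_pow_iff_left₀ (norm_nonneg _) (by positivity) (by norm_num)).mp h

lemma continuous_inner : Continuous (fun p : E × E => inner A p.1 p.2) := by
  let L : E →L⋆[ℂ] E →L[ℂ] A := LinearMap.mkContinuous₂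
    (LinearMap.mk₂'ₛₗ (starRingEnd ℂ) (RingHom.id ℂ) (fun x y => inner A x y)
      (fun _ _ _ => inner_add_left) (fun _ _ _ => inner_smul_left_complex)
      (fun _ _ _ => inner_add_right) (fun _ _ _ => inner_smul_right_complex)) 1
    (fun x y => by simpa using norm_inner_le (A := A) (x := x) (y := y))
  exact (L.continuous.comp continuous_fst).clm_apply continuous_snd

end RightCStarModule

end RCS

section Aux

variable {E F : Type*}
  [NormedAddCommGroup E] [NormedSpace ℂ E] [SMul Aᵐᵒᵖ E] [RightCStarModule A E]
  [NormedAddCommGroup F] [NormedSpace ℂ F] [SMul Aᵐᵒᵖ F] [RightCStarModule A F]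

/-- An adjoint of a map bounded by `C` is bounded by `C`. -/
lemma adjoint_norm_le {T : A → F} {S : F → A} (h : IsAdjointPair A T S)
    {C : ℝ} (hC : 0 ≤ C) (hT : ∀ x, ‖T x‖ ≤ C * ‖x‖) (y : F) : ‖S y‖ ≤ C * ‖y‖ := by
  rcases le_or_gt ‖S y‖ 0 with h0 | h0
  · exact h0.trans (by positivity)
  · have key : ‖S y‖ ^ 2 ≤ (C * ‖y‖) * ‖S y‖ := by
      calc ‖S y‖ ^ 2 = ‖(inner A (S y) (S y) : A)‖ := CStarModule.norm_sq_eq A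
        _ = ‖(inner A (T (S y)) y : A)‖ := by rw [h (S y) y]
        _ ≤ ‖T (S y)‖ * ‖y‖ := RightCStarModule.norm_inner_le (A := A)
        _ ≤ (C * ‖S y‖) * ‖y‖ := by
            have := hT (S y)
            nlinarith [norm_nonneg y]
        _ = (C * ‖y‖) * ‖S y‖ := by ring
    nlinarith

/-- A norm limit of locally adjointable operators is locally adjointable. -/
lemma locallyAdjointable_of_tendsto (Fn : ℕ → (E →L[ℂ] F)) (F0 : E →L[ℂ] F)
    (hFn : ∀ n, LocallyAdjointable A ⇑(Fn n))
    (hlim : Tendsto Fn atTop (nhds F0)) : LocallyAdjointable A ⇑F0 := by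
  intro γ hγl hγa
  choose S hS using fun n => hFn n γ hγl hγa
  -- key uniform estimate on differences of adjoints
  have key : ∀ m n : ℕ, ∀ y : F, ‖S n y - S m y‖ ≤ (dist (Fn n) (Fn m) * ‖γ‖) * ‖y‖ := by
    intro m n y
    refine adjoint_norm_le (T := fun x : A => (Fn n) (γ x) - (Fn m) (γ x))
      (S := fun y => S n y - S m y) ?_ (by positivity) ?_ y
    · intro x y
      have h1 := hS n x y
      have h2 := hS m x y
      simp only [Function.comp_apply] at h1 h2
      simp [RightCStarModule.inner_sub_left, CStarModule.inner_sub_left, CStarModule.inner_sub_right, h1, h2]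
    · intro x
      calc ‖(Fn n) (γ x) - (Fn m) (γ x)‖ = ‖(Fn n - Fn m) (γ x)‖ := by simp
        _ ≤ ‖Fn n - Fn m‖ * ‖γ x‖ := (Fn n - Fn m).le_opNorm _
        _ ≤ ‖Fn n - Fn m‖ * (‖γ‖ * ‖x‖) := by gcongr; exact γ.le_opNorm x
        _ = (dist (Fn n) (Fn m) * ‖γ‖) * ‖x‖ := by rw [dist_eq_norm]; ring
  have hFc : CauchySeq Fn := hlim.cauchySeq
  have hcau : ∀ y : F, CauchySeq fun n => S n y := by
    intro y
    rw [Metric.cauchySeq_iff]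
    intro ε hε
    obtain ⟨Nn, hNn⟩ := Metric.cauchySeq_iff.mp hFc (ε / (‖γ‖ * ‖y‖ + 1))
      (by positivity)
    refine ⟨Nn, fun n hn m hm => ?_⟩
    have hd := hNn n hn m hm
    have h1 : dist (S n y) (S m y) ≤ (dist (Fn n) (Fn m) * ‖γ‖) * ‖y‖ := by
      rw [dist_eq_norm]; exact key m n y
    have hgy : (0:ℝ) ≤ ‖γ‖ * ‖y‖ := by positivity
    have hdpos : (0:ℝ) ≤ dist (Fn n) (Fn m) := dist_nonneg
    calc dist (S n y) (S m y) ≤ dist (Fn n) (Fn m) * (‖γ‖ * ‖y‖) := by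
          rw [← mul_assoc]; exact h1
      _ ≤ dist (Fn n) (Fn m) * (‖γ‖ * ‖y‖ + 1) := by nlinarith
      _ < (ε / (‖γ‖ * ‖y‖ + 1)) * (‖γ‖ * ‖y‖ + 1) := by
          have : (0:ℝ) < ‖γ‖ * ‖y‖ + 1 := by positivity
          exact mul_lt_mul_of_pos_right hd this
      _ = ε := by field_simp
  have hexists : ∀ y : F, ∃ z : A, Tendsto (fun n => S n y) atTop (nhds z) :=
    fun y => cauchySeq_tendsto_of_complete (hcau y)
  choose S' hS' using hexists
  refine ⟨S', fun x y => ?_⟩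
  -- pointwise convergence of `Fn n (γ x)`
  have hnorm0 : Tendsto (fun n => ‖Fn n - F0‖) atTop (nhds 0) := by
    have := (tendsto_iff_norm_sub_tendsto_zero).mp hlim
    simpa using this
  have hpt : Tendsto (fun n => (Fn n) (γ x)) atTop (nhds (F0 (γ x))) := by
    rw [tendsto_iff_norm_sub_tendsto_zero]
    have hb : ∀ n, ‖(Fn n) (γ x) - F0 (γ x)‖ ≤ ‖Fn n - F0‖ * ‖γ x‖ := by
      intro n
      calc ‖(Fn n) (γ x) - F0 (γ x)‖ = ‖(Fn n - F0) (γ x)‖ := by simp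
        _ ≤ ‖Fn n - F0‖ * ‖γ x‖ := (Fn n - F0).le_opNorm _
    have hlim2 : Tendsto (fun n => ‖Fn n - F0‖ * ‖γ x‖) atTop (nhds 0) := by
      simpa using hnorm0.mul_const ‖γ x‖
    exact squeeze_zero (fun n => norm_nonneg _) hb hlim2
  have h1 : Tendsto (fun n => (inner A ((Fn n) (γ x)) y : A)) atTop
      (nhds (inner A (F0 (γ x)) y)) := by
    have := (RightCStarModule.continuous_inner (A := A) (E := F)).tendsto (F0 (γ x), y)
    exact this.comp (hpt.prodMk_nhds tendsto_const_nhds)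
  have h2 : Tendsto (fun n => (inner A x (S n y) : A)) atTop
      (nhds (inner A x (S' y))) := by
    have := (CStarModule.continuous_inner (A := A) (E := A)).tendsto (x, S' y)
    exact this.comp (tendsto_const_nhds.prodMk_nhds (hS' y))
  have heq : (fun n => (inner A ((Fn n) (γ x)) y : A)) = fun n => (inner A x (S n y) : A) := by
    funext n; exact hS n x y
  rw [heq] at h1
  exact tendsto_nhds_unique h1 h2

end Aux

/-- The locally adjointable operators from `K` to `N` form a norm-closed linear subspace
of the Banach space of all bounded `A`-linear maps; in particular, a norm limit of
locally adjointable operators is locally adjointable. -/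
theorem locallyAdjointable_closed_subspace :
    (∀ F G : K →L[ℂ] N, IsALinear A ⇑F → IsALinear A ⇑G →
      LocallyAdjointable A ⇑F → LocallyAdjointable A ⇑G → LocallyAdjointable A ⇑(F + G)) ∧
    (∀ (c : ℂ) (F : K →L[ℂ] N), IsALinear A ⇑F →
      LocallyAdjointable A ⇑F → LocallyAdjointable A ⇑(c • F)) ∧
    IsClosed {F : K →L[ℂ] N | IsALinear A ⇑F ∧ LocallyAdjointable A ⇑F} ∧
    (∀ (Fn : ℕ → (K →L[ℂ] N)) (F : K →L[ℂ] N),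
      (∀ n, IsALinear A ⇑(Fn n)) → (∀ n, LocallyAdjointable A ⇑(Fn n)) →
      Filter.Tendsto Fn Filter.atTop (nhds F) → LocallyAdjointable A ⇑F) := by
  refine ⟨?_, ?_, ?_, ?_⟩
  · -- addition
    intro F G _ _ hF hG γ hγl hγa
    obtain ⟨S1, h1⟩ := hF γ hγl hγa
    obtain ⟨S2, h2⟩ := hG γ hγl hγa
    refine ⟨fun y => S1 y + S2 y, fun x y => ?_⟩
    have e1 := h1 x y
    have e2 := h2 x y
    simp only [Function.comp_apply] at e1 e2 ⊢
    simp [RightCStarModule.inner_add_left, CStarModule.inner_add_left, CStarModule.inner_add_right, e1, e2]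
  · -- scalar multiplication
    intro c F _ hF γ hγl hγa
    obtain ⟨S, h⟩ := hF γ hγl hγa
    refine ⟨fun y => (starRingEnd ℂ c) • S y, fun x y => ?_⟩
    have e := h x y
    simp only [Function.comp_apply] at e ⊢
    simp [RightCStarModule.inner_smul_left_complex, CStarModule.inner_smul_left_complex, CStarModule.inner_smul_right_complex, e]
  · -- closedness
    refine IsSeqClosed.isClosed ?_
    intro Fn F0 hmem hlim
    constructor
    · -- A-linearity of the limit
      intro x a
      have hl : ∀ n, (Fn n) (x <• a) = (Fn n) x <• a := fun n => (hmem n).1 x a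
      have hnorm0 : Tendsto (fun n => ‖Fn n - F0‖) atTop (nhds 0) := by
        have := (tendsto_iff_norm_sub_tendsto_zero).mp hlim
        simpa using this
      have hpt : ∀ z : K, Tendsto (fun n => (Fn n) z) atTop (nhds (F0 z)) := by
        intro z
        rw [tendsto_iff_norm_sub_tendsto_zero]
        have hb : ∀ n, ‖(Fn n) z - F0 z‖ ≤ ‖Fn n - F0‖ * ‖z‖ := by
          intro n
          calc ‖(Fn n) z - F0 z‖ = ‖(Fn n - F0) z‖ := by simp
            _ ≤ ‖Fn n - F0‖ * ‖z‖ := (Fn n - F0).le_opNorm _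
        exact squeeze_zero (fun n => norm_nonneg _) hb (by simpa using hnorm0.mul_const ‖z‖)
      -- `(Fn n x) <• a → (F0 x) <• a` via the inner-product norm estimate
      have hsm : Tendsto (fun n => (Fn n) x <• a) atTop (nhds (F0 x <• a)) := by
        rw [tendsto_iff_norm_sub_tendsto_zero]
        have hb : ∀ n, ‖(Fn n) x <• a - F0 x <• a‖ ≤ ‖(Fn n) x - F0 x‖ * ‖a‖ := by
          intro n
          set u := (Fn n) x
          set v := F0 x
          have hin : (inner A (u <• a - v <• a) (u <• a - v <• a) : A)
              = star a * (inner A (u - v) (u - v) : A) * a := by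
            simp only [RightCStarModule.inner_sub_left, RightCStarModule.inner_sub_right,
              RightCStarModule.inner_op_smul_left, RightCStarModule.inner_op_smul_right]
            noncomm_ring
          have hsq : ‖u <• a - v <• a‖ ^ 2 ≤ (‖u - v‖ * ‖a‖) ^ 2 := by
            calc ‖u <• a - v <• a‖ ^ 2
                = ‖(inner A (u <• a - v <• a) (u <• a - v <• a) : A)‖ := RightCStarModule.norm_sq_eq _
              _ = ‖star a * (inner A (u - v) (u - v) : A) * a‖ := by rw [hin]
              _ ≤ ‖star a‖ * ‖(inner A (u - v) (u - v) : A)‖ * ‖a‖ := by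
                  calc ‖star a * (inner A (u - v) (u - v) : A) * a‖
                      ≤ ‖star a * (inner A (u - v) (u - v) : A)‖ * ‖a‖ := norm_mul_le _ _
                    _ ≤ ‖star a‖ * ‖(inner A (u - v) (u - v) : A)‖ * ‖a‖ := by
                        gcongr; exact norm_mul_le _ _
              _ = ‖a‖ * (‖u - v‖ ^ 2) * ‖a‖ := by rw [norm_star, RightCStarModule.norm_sq_eq (A := A)]
              _ = (‖u - v‖ * ‖a‖) ^ 2 := by ring
          have h1 : (0:ℝ) ≤ ‖u - v‖ * ‖a‖ := by positivity
          nlinarith [norm_nonneg (u <• a - v <• a)]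
        have hto : Tendsto (fun n => ‖(Fn n) x - F0 x‖ * ‖a‖) atTop (nhds 0) := by
          have := (tendsto_iff_norm_sub_tendsto_zero).mp (hpt x)
          simpa using this.mul_const ‖a‖
        exact squeeze_zero (fun n => norm_nonneg _) hb hto
      have hcongr : Tendsto (fun n => (Fn n) (x <• a)) atTop (nhds (F0 x <• a)) := by
        simpa only [hl] using hsm
      exact tendsto_nhds_unique (hpt (x <• a)) hcongr
    · exact locallyAdjointable_of_tendsto Fn F0 (fun n => (hmem n).2) hlim
  · -- norm limits
    intro Fn F0 _ hFn hlim
    exact locallyAdjointable_of_tendsto Fn F0 hFn hlim
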